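/- arXiv:1403.5873 — 3 statements merged into one kernel-verified Lean document; each statement's English description precedes it below -/
import Mathlib

section
/- A regular category C is a Mal'tsev category if and only if the composition of effective equivalence relations in C is commutative, i.e. Eq(f) Eq(g) = Eq(g) Eq(f) for every pair of regular epimorphisms f and g of C with the same domain. -/
open CategoryTheory CategoryTheory.Limits

universe v u

namespace Paper

variable {𝒞 : Type u} [Category.{v} 𝒞]

/-- `f` is a regular epimorphism: it is a coequaliser of some pair of morphisms. -/
def IsRegEpi {X Y : 𝒞} (f : X ⟶ Y) : Prop :=
  ∃ (Z : 𝒞) (a b : Z ⟶ X), a ≫ f = b ≫ f ∧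
    ∀ {T : 𝒞} (h : X ⟶ T), a ≫ h = b ≫ h → ∃! u : Y ⟶ T, f ≫ u = h

/-- Regular epimorphisms are pullback-stable. -/
def RegEpisStable (𝒞 : Type u) [Category.{v} 𝒞] : Prop :=
  ∀ {P X Y Z : 𝒞} (p₁ : P ⟶ X) (p₂ : P ⟶ Y) (f : X ⟶ Z) (g : Y ⟶ Z),
    IsPullback p₁ p₂ f g → IsRegEpi g → IsRegEpi p₁

/-- Every kernel pair admits a coequaliser. -/
def KernelPairsHaveCoequalisers (𝒞 : Type u) [Category.{v} 𝒞] : Prop :=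
  ∀ {R X Y : 𝒞} (f : X ⟶ Y) (a b : R ⟶ X), IsKernelPair f a b →
    ∃ (Q : 𝒞) (q : X ⟶ Q), a ≫ q = b ≫ q ∧
      ∀ {T : 𝒞} (h : X ⟶ T), a ≫ h = b ≫ h → ∃! u : Q ⟶ T, q ≫ u = h

/-- A relation from `X` to `Y`: a jointly monomorphic span. -/
structure Rel (𝒞 : Type u) [Category.{v} 𝒞] (X Y : 𝒞) where
  R : 𝒞
  p1 : R ⟶ X
  p2 : R ⟶ Y
  jm : ∀ {Z : 𝒞} (a b : Z ⟶ R), a ≫ p1 = b ≫ p1 → a ≫ p2 = b ≫ p2 → a = b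

variable {X Y Z : 𝒞}

/-- `ρ` is a subrelation of `σ`. -/
def Rel.le (ρ σ : Rel 𝒞 X Y) : Prop :=
  ∃ j : ρ.R ⟶ σ.R, j ≫ σ.p1 = ρ.p1 ∧ j ≫ σ.p2 = ρ.p2

/-- `ρ` and `σ` are the same relation (isomorphic as subobjects of `X × Y`). -/
def Rel.equiv (ρ σ : Rel 𝒞 X Y) : Prop := ρ.le σ ∧ σ.le ρ

/-- The opposite relation. -/
def Rel.op (ρ : Rel 𝒞 X Y) : Rel 𝒞 Y X :=
  ⟨ρ.R, ρ.p2, ρ.p1, fun a b h2 h1 => ρ.jm a b h1 h2⟩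

/-- A morphism viewed as a relation. -/
def homRel (f : X ⟶ Y) : Rel 𝒞 X Y :=
  ⟨X, 𝟙 X, f, fun a b h _ => by simpa using h⟩

/-- The discrete (diagonal) relation on `X`. -/
def diagRel (X : 𝒞) : Rel 𝒞 X X := homRel (𝟙 X)

/-- The kernel pair `Eq(f)` of `f` as a relation on `X`. -/
noncomputable def kerPairRel [HasPullbacks 𝒞] (f : X ⟶ Y) : Rel 𝒞 X X :=
  ⟨pullback f f, pullback.fst f f, pullback.snd f f,
    fun a b h1 h2 => pullback.hom_ext h1 h2⟩

/-- `τ` is the composite `σρ` (first `ρ` from `X` to `Y`, then `σ` from `Y` to `Z`),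
i.e. the (regular epi, jointly mono) factorisation of the span induced on the
pullback of `ρ.p2` and `σ.p1`. -/
def IsRelComp [HasPullbacks 𝒞] (σ : Rel 𝒞 Y Z) (ρ : Rel 𝒞 X Y) (τ : Rel 𝒞 X Z) : Prop :=
  ∃ e : pullback ρ.p2 σ.p1 ⟶ τ.R, IsRegEpi e ∧
    e ≫ τ.p1 = pullback.fst ρ.p2 σ.p1 ≫ ρ.p1 ∧
    e ≫ τ.p2 = pullback.snd ρ.p2 σ.p1 ≫ σ.p2

def Rel.IsReflexive (ρ : Rel 𝒞 X X) : Prop :=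
  ∃ r : X ⟶ ρ.R, r ≫ ρ.p1 = 𝟙 X ∧ r ≫ ρ.p2 = 𝟙 X

def Rel.IsSymmetric (ρ : Rel 𝒞 X X) : Prop :=
  ∃ s : ρ.R ⟶ ρ.R, s ≫ ρ.p1 = ρ.p2 ∧ s ≫ ρ.p2 = ρ.p1

def Rel.IsTransitive [HasPullbacks 𝒞] (ρ : Rel 𝒞 X X) : Prop :=
  ∃ t : pullback ρ.p2 ρ.p1 ⟶ ρ.R,
    t ≫ ρ.p1 = pullback.fst ρ.p2 ρ.p1 ≫ ρ.p1 ∧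
    t ≫ ρ.p2 = pullback.snd ρ.p2 ρ.p1 ≫ ρ.p2

def Rel.IsEquivalence [HasPullbacks 𝒞] (ρ : Rel 𝒞 X X) : Prop :=
  ρ.IsReflexive ∧ ρ.IsSymmetric ∧ ρ.IsTransitive

/-- A finitely complete category is a Mal'tsev category when every reflexive
relation in it is an equivalence relation. -/
def IsMaltsev (𝒞 : Type u) [Category.{v} 𝒞] [HasPullbacks 𝒞] : Prop :=
  ∀ {X : 𝒞} (ρ : Rel 𝒞 X X), ρ.IsReflexive → ρ.IsEquivalence

/-- A square of type (1): split epimorphisms `f` (with section `s`) and `g`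
(with section `t`), regular epimorphisms `c` and `d`, with `f·c = d·g` and
`s·d = c·t`. -/
structure IsSquare1 {A B E D : 𝒞} (f : A ⟶ B) (s : B ⟶ A) (g : E ⟶ D) (t : D ⟶ E)
    (c : E ⟶ A) (d : D ⟶ B) : Prop where
  sec_f : s ≫ f = 𝟙 B
  sec_g : t ≫ g = 𝟙 D
  regepi_c : IsRegEpi c
  regepi_d : IsRegEpi d
  comm1 : c ≫ f = g ≫ d
  comm2 : d ≫ s = t ≫ c

/-- `N` is an ideal of morphisms. -/
def IsIdeal (N : MorphismProperty 𝒞) : Prop :=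
  ∀ {X Y Z : 𝒞} (f : X ⟶ Y) (g : Y ⟶ Z), N f ∨ N g → N (f ≫ g)

/-- `n` is an `N`-kernel of `f`. -/
def IsNKernel (N : MorphismProperty 𝒞) {X Y K : 𝒞} (f : X ⟶ Y) (n : K ⟶ X) : Prop :=
  N (n ≫ f) ∧ ∀ {Z : 𝒞} (m : Z ⟶ X), N (m ≫ f) → ∃! u : Z ⟶ K, u ≫ n = m

/-- Every morphism admits an `N`-kernel. -/
def HasNKernels (N : MorphismProperty 𝒞) : Prop :=
  ∀ {X Y : 𝒞} (f : X ⟶ Y), ∃ (K : 𝒞) (n : K ⟶ X), IsNKernel N f n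

/-- `τ` is the largest star subrelation `ρ*` of the relation `ρ`. -/
def IsLargestStarSub (N : MorphismProperty 𝒞) (ρ τ : Rel 𝒞 X Y) : Prop :=
  τ.le ρ ∧ N τ.p1 ∧ ∀ σ : Rel 𝒞 X Y, σ.le ρ → N σ.p1 → σ.le τ

/-- `(s1, s2)` is the star-kernel of `f`: the universal star coequalised by `f`. -/
def IsStarKernel (N : MorphismProperty 𝒞) {S X Y : 𝒞} (f : X ⟶ Y) (s1 s2 : S ⟶ X) : Prop :=
  N s1 ∧ s1 ≫ f = s2 ≫ f ∧
    ∀ {T : 𝒞} (t1 t2 : T ⟶ X), N t1 → t1 ≫ f = t2 ≫ f →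
      ∃! u : T ⟶ S, u ≫ s1 = t1 ∧ u ≫ s2 = t2

/-- `(ν1, ν2)` is the star of the pullback relation of `(g, δ)`: the universal
pair with `ν1 ∈ N` and `δ·ν1 = g·ν2`. -/
def IsStarPullbackRel (N : MorphismProperty 𝒞) {W E D P : 𝒞} (δ : W ⟶ D) (g : E ⟶ D)
    (ν1 : P ⟶ W) (ν2 : P ⟶ E) : Prop :=
  N ν1 ∧ ν1 ≫ δ = ν2 ≫ g ∧
    ∀ {T : 𝒞} (t1 : T ⟶ W) (t2 : T ⟶ E), N t1 → t1 ≫ δ = t2 ≫ g →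
      ∃! u : T ⟶ P, u ≫ ν1 = t1 ∧ u ≫ ν2 = t2

/-- `f` is a coequaliser of `(s1, s2)`. -/
def IsCoeqOf {S X Y : 𝒞} (f : X ⟶ Y) (s1 s2 : S ⟶ X) : Prop :=
  s1 ≫ f = s2 ≫ f ∧ ∀ {T : 𝒞} (h : X ⟶ T), s1 ≫ h = s2 ≫ h → ∃! u : Y ⟶ T, f ≫ u = h

/-- Star-regularity: every regular epimorphism is a coequaliser of a star. -/
def StarRegular (𝒞 : Type u) [Category.{v} 𝒞] (N : MorphismProperty 𝒞) : Prop :=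
  ∀ {X Y : 𝒞} (f : X ⟶ Y), IsRegEpi f →
    ∃ (S : 𝒞) (s1 s2 : S ⟶ X), N s1 ∧ IsCoeqOf f s1 s2

/-- `f` is saturating: the induced morphism between the `N`-kernels of the
identities is a regular epimorphism. -/
def Saturating (N : MorphismProperty 𝒞) {X Y : 𝒞} (f : X ⟶ Y) : Prop :=
  ∀ {KX KY : 𝒞} (nX : KX ⟶ X) (nY : KY ⟶ Y), IsNKernel N (𝟙 X) nX → IsNKernel N (𝟙 Y) nY →
    ∀ u : KX ⟶ KY, u ≫ nY = nX ≫ f → IsRegEpi u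

/-- `X` is an `N`-trivial object. -/
def NTrivial (N : MorphismProperty 𝒞) (X : 𝒞) : Prop := N (𝟙 X)

/-- The multi-pointed category has enough trivial objects: `N` is a closed ideal and
`N`-trivial objects are closed under subobjects and squares. -/
def EnoughTrivialObjects [HasBinaryProducts 𝒞] (N : MorphismProperty 𝒞) : Prop :=
  (∀ {X Y : 𝒞} (f : X ⟶ Y), N f → ∃ (T : 𝒞) (p : X ⟶ T) (q : T ⟶ Y),
      NTrivial N T ∧ p ≫ q = f) ∧
  (∀ {S X : 𝒞} (m : S ⟶ X), Mono m → NTrivial N X → NTrivial N S) ∧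
  (∀ X : 𝒞, NTrivial N X → NTrivial N (X ⨯ X))

/-- A square of type (1) is a star-regular pushout when `(c g°)* = f° d*`. -/
def IsStarRegularPushout [HasPullbacks 𝒞] (N : MorphismProperty 𝒞) {A B E D : 𝒞}
    (f : A ⟶ B) (g : E ⟶ D) (c : E ⟶ A) (d : D ⟶ B) : Prop :=
  ∀ (ρ τ μ : Rel 𝒞 D A) (ds : Rel 𝒞 D B),
    IsRelComp (homRel c) (Rel.op (homRel g)) ρ → IsLargestStarSub N ρ τ →
    IsLargestStarSub N (homRel d) ds → IsRelComp (Rel.op (homRel f)) ds μ →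
    τ.equiv μ

/-- 2-star-permutability: `Eq(f) Eq(g)* = Eq(g) Eq(f)*` for all regular
epimorphisms `f`, `g` with the same domain. -/
def TwoStarPermutable (𝒞 : Type u) [Category.{v} 𝒞] [HasPullbacks 𝒞]
    (N : MorphismProperty 𝒞) : Prop :=
  ∀ {X Y Z : 𝒞} (f : X ⟶ Y) (g : X ⟶ Z), IsRegEpi f → IsRegEpi g →
    ∀ (sf sg : Rel 𝒞 X X), IsLargestStarSub N (kerPairRel f) sf →
      IsLargestStarSub N (kerPairRel g) sg →
    ∀ (τ₁ τ₂ : Rel 𝒞 X X), IsRelComp (kerPairRel f) sg τ₁ →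
      IsRelComp (kerPairRel g) sf τ₂ → τ₁.equiv τ₂

section Pointed

variable [HasZeroMorphisms 𝒞]

/-- `k` is a kernel of `f`. -/
def IsKernelOf {K X Y : 𝒞} (k : K ⟶ X) (f : X ⟶ Y) : Prop :=
  k ≫ f = 0 ∧ ∀ {Z : 𝒞} (m : Z ⟶ X), m ≫ f = 0 → ∃! u : Z ⟶ K, u ≫ k = m

/-- `f` is a cokernel of `k`. -/
def IsCokernelOf {X Y K : 𝒞} (f : X ⟶ Y) (k : K ⟶ X) : Prop :=
  k ≫ f = 0 ∧ ∀ {T : 𝒞} (h : X ⟶ T), k ≫ h = 0 → ∃! u : Y ⟶ T, f ≫ u = h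

/-- Short exact sequence `K → X ↠ Y`. -/
def IsShortExact {K X Y : 𝒞} (k : K ⟶ X) (f : X ⟶ Y) : Prop :=
  IsKernelOf k f ∧ IsCokernelOf f k

/-- Subtractivity: every reflexive, left punctual relation is right punctual. -/
def IsSubtractive (𝒞 : Type u) [Category.{v} 𝒞] [HasZeroMorphisms 𝒞] : Prop :=
  ∀ {X : 𝒞} (ρ : Rel 𝒞 X X), ρ.IsReflexive →
    (∃ l : X ⟶ ρ.R, l ≫ ρ.p1 = 𝟙 X ∧ l ≫ ρ.p2 = 0) →
    (∃ r : X ⟶ ρ.R, r ≫ ρ.p1 = 0 ∧ r ≫ ρ.p2 = 𝟙 X)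

end Pointed

section Aux

lemma IsRegEpi.cancel {X Y : 𝒞} {f : X ⟶ Y} (hf : IsRegEpi f) {T : 𝒞} {u v : Y ⟶ T}
    (h : f ≫ u = f ≫ v) : u = v := by
  obtain ⟨Z, a, b, hab, huniv⟩ := hf
  obtain ⟨t, _, ht⟩ := huniv (f ≫ u)
    (by rw [← Category.assoc, hab, Category.assoc])
  exact (ht u rfl).trans (ht v h.symm).symm

lemma isRegEpi_of_split {X Y : 𝒞} (f : X ⟶ Y) (s : Y ⟶ X) (hs : s ≫ f = 𝟙 Y) :
    IsRegEpi f := by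
  refine ⟨X, 𝟙 X, f ≫ s, by simp [hs], ?_⟩
  intro T h hh
  refine ⟨s ≫ h, ?_, ?_⟩
  · show f ≫ s ≫ h = h
    simpa using hh.symm
  · intro u hu; rw [← hu, ← Category.assoc, hs, Category.id_comp]

lemma isRegEpi_precomp {W P E : 𝒞} (w : W ⟶ P) (w' : P ⟶ W) (hww' : w ≫ w' = 𝟙 W)
    (hw'w : w' ≫ w = 𝟙 P) {e : P ⟶ E} (he : IsRegEpi e) : IsRegEpi (w ≫ e) := by
  obtain ⟨Z, a, b, hab, huniv⟩ := he
  refine ⟨Z, a ≫ w', b ≫ w', by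
    simp only [Category.assoc]; rw [reassoc_of% hw'w]; exact hab, ?_⟩
  intro T h hh
  obtain ⟨t, ht, htu⟩ := huniv (w' ≫ h) (by simpa [Category.assoc] using hh)
  refine ⟨t, by
    show (w ≫ e) ≫ t = h
    rw [Category.assoc, ht, ← Category.assoc, hww', Category.id_comp], ?_⟩
  intro u hu
  refine htu u ?_
  rw [← hu, ← Category.assoc, ← Category.assoc, hw'w, Category.id_comp]

lemma image_exists [HasPullbacks 𝒞] (hcoeq : KernelPairsHaveCoequalisers 𝒞)
    (hstab : RegEpisStable 𝒞) {P C : 𝒞} (f : P ⟶ C) :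
    ∃ (I : 𝒞) (e : P ⟶ I) (m : I ⟶ C), IsRegEpi e ∧ Mono m ∧ e ≫ m = f := by
  obtain ⟨Q, q, hq, huniv⟩ := hcoeq f (pullback.fst f f) (pullback.snd f f)
    (IsPullback.of_hasPullback f f)
  have hqreg : IsRegEpi q := ⟨_, _, _, hq, fun h hh => huniv h hh⟩
  obtain ⟨m, hm, _⟩ := huniv f pullback.condition
  refine ⟨Q, q, m, hqreg, ?_, hm⟩
  -- show m is a monomorphism
  have hcd : (pullback.fst m m : pullback m m ⟶ Q) = pullback.snd m m := by
    set c : pullback m m ⟶ Q := pullback.fst m m with hc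
    set d : pullback m m ⟶ Q := pullback.snd m m with hd
    have h1 : IsRegEpi (pullback.fst c q) :=
      hstab _ _ _ _ (IsPullback.of_hasPullback c q) hqreg
    have h2 : IsRegEpi (pullback.fst (pullback.fst c q ≫ d) q) :=
      hstab _ _ _ _ (IsPullback.of_hasPullback _ q) hqreg
    set s1 : pullback c q ⟶ pullback m m := pullback.fst c q with hs1
    set t1 : pullback c q ⟶ P := pullback.snd c q with ht1
    set s2 : pullback (s1 ≫ d) q ⟶ pullback c q := pullback.fst (s1 ≫ d) q with hs2
    set t2 : pullback (s1 ≫ d) q ⟶ P := pullback.snd (s1 ≫ d) q with ht2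
    have hc' : s1 ≫ c = t1 ≫ q := pullback.condition
    have hd' : s2 ≫ (s1 ≫ d) = t2 ≫ q := pullback.condition
    have hfeq : (s2 ≫ t1) ≫ f = t2 ≫ f := by
      rw [← hm]
      calc (s2 ≫ t1) ≫ q ≫ m = s2 ≫ (t1 ≫ q) ≫ m := by simp only [Category.assoc]
        _ = s2 ≫ (s1 ≫ c) ≫ m := by rw [hc']
        _ = s2 ≫ s1 ≫ c ≫ m := by simp only [Category.assoc]
        _ = s2 ≫ s1 ≫ d ≫ m := by rw [pullback.condition (f := m) (g := m)]
        _ = (s2 ≫ (s1 ≫ d)) ≫ m := by simp only [Category.assoc]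
        _ = (t2 ≫ q) ≫ m := by rw [hd']
        _ = t2 ≫ q ≫ m := by rw [Category.assoc]
    have hqeq : (s2 ≫ t1) ≫ q = t2 ≫ q := by
      calc (s2 ≫ t1) ≫ q
          = pullback.lift (s2 ≫ t1) t2 hfeq ≫ pullback.fst f f ≫ q := by
            rw [← Category.assoc, pullback.lift_fst]
        _ = pullback.lift (s2 ≫ t1) t2 hfeq ≫ pullback.snd f f ≫ q := by rw [hq]
        _ = t2 ≫ q := by rw [← Category.assoc, pullback.lift_snd]
    have key : (s2 ≫ s1) ≫ c = (s2 ≫ s1) ≫ d := by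
      calc (s2 ≫ s1) ≫ c = s2 ≫ s1 ≫ c := by rw [Category.assoc]
        _ = s2 ≫ t1 ≫ q := by rw [hc']
        _ = (s2 ≫ t1) ≫ q := by rw [Category.assoc]
        _ = t2 ≫ q := hqeq
        _ = s2 ≫ (s1 ≫ d) := hd'.symm
        _ = (s2 ≫ s1) ≫ d := by rw [Category.assoc]
    have step : s1 ≫ c = s1 ≫ d :=
      h2.cancel (by simpa only [Category.assoc] using key)
    exact h1.cancel step
  constructor
  intro Z x y hxy
  calc x = pullback.lift x y hxy ≫ pullback.fst m m := (pullback.lift_fst _ _ _).symm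
    _ = pullback.lift x y hxy ≫ pullback.snd m m := by rw [hcd]
    _ = y := pullback.lift_snd _ _ _

lemma relComp_exists [HasFiniteLimits 𝒞] (hcoeq : KernelPairsHaveCoequalisers 𝒞)
    (hstab : RegEpisStable 𝒞) {X Y Z : 𝒞} (σ : Rel 𝒞 Y Z) (ρ : Rel 𝒞 X Y) :
    ∃ τ : Rel 𝒞 X Z, IsRelComp σ ρ τ := by
  obtain ⟨I, e, m, he, hm, hem⟩ := image_exists hcoeq hstab
    (prod.lift (pullback.fst ρ.p2 σ.p1 ≫ ρ.p1) (pullback.snd ρ.p2 σ.p1 ≫ σ.p2))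
  refine ⟨⟨I, m ≫ prod.fst, m ≫ prod.snd, ?_⟩, e, he, ?_, ?_⟩
  · intro W a b h1 h2
    have : a ≫ m = b ≫ m := by
      apply Limits.prod.hom_ext
      · simpa only [Category.assoc] using h1
      · simpa only [Category.assoc] using h2
    exact (cancel_mono m).mp this
  · show e ≫ m ≫ prod.fst = _
    rw [← Category.assoc, hem, prod.lift_fst]
  · show e ≫ m ≫ prod.snd = _
    rw [← Category.assoc, hem, prod.lift_snd]

lemma relComp_le [HasPullbacks 𝒞] {X Y Z : 𝒞} {σ : Rel 𝒞 Y Z} {ρ : Rel 𝒞 X Y}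
    {τ τ' : Rel 𝒞 X Z} (h : IsRelComp σ ρ τ) (h' : IsRelComp σ ρ τ') : τ.le τ' := by
  obtain ⟨e, he, he1, he2⟩ := h
  obtain ⟨e', he', he1', he2'⟩ := h'
  obtain ⟨W, a, b, hab, huniv⟩ := he
  have key1 : a ≫ pullback.fst ρ.p2 σ.p1 ≫ ρ.p1 = b ≫ pullback.fst ρ.p2 σ.p1 ≫ ρ.p1 := by
    rw [← he1, ← Category.assoc, ← Category.assoc, hab]
  have key2 : a ≫ pullback.snd ρ.p2 σ.p1 ≫ σ.p2 = b ≫ pullback.snd ρ.p2 σ.p1 ≫ σ.p2 := by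
    rw [← he2, ← Category.assoc, ← Category.assoc, hab]
  have hab' : a ≫ e' = b ≫ e' := by
    apply τ'.jm
    · simp only [Category.assoc]; rw [he1']; exact key1
    · simp only [Category.assoc]; rw [he2']; exact key2
  obtain ⟨j, hj, _⟩ := huniv e' hab'
  have hereg : IsRegEpi e := ⟨W, a, b, hab, fun h hh => huniv h hh⟩
  refine ⟨j, hereg.cancel ?_, hereg.cancel ?_⟩
  · rw [← Category.assoc, hj, he1', he1]
  · rw [← Category.assoc, hj, he2', he2]

lemma relComp_unique [HasPullbacks 𝒞] {X Y Z : 𝒞} {σ : Rel 𝒞 Y Z} {ρ : Rel 𝒞 X Y}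
    {τ τ' : Rel 𝒞 X Z} (h : IsRelComp σ ρ τ) (h' : IsRelComp σ ρ τ') : τ.equiv τ' :=
  ⟨relComp_le h h', relComp_le h' h⟩

lemma Rel.equiv.trans' {X Y : 𝒞} {τ₁ τ₂ τ₃ : Rel 𝒞 X Y} (h : τ₁.equiv τ₂)
    (h' : τ₂.equiv τ₃) : τ₁.equiv τ₃ := by
  obtain ⟨⟨j1, hj11, hj12⟩, ⟨k1, hk11, hk12⟩⟩ := h
  obtain ⟨⟨j2, hj21, hj22⟩, ⟨k2, hk21, hk22⟩⟩ := h'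
  exact ⟨⟨j1 ≫ j2, by rw [Category.assoc, hj21, hj11], by rw [Category.assoc, hj22, hj12]⟩,
    ⟨k2 ≫ k1, by rw [Category.assoc, hk11, hk21], by rw [Category.assoc, hk12, hk22]⟩⟩

end Aux

/-- A regular category `𝒞` is a Mal'tsev category if and only if
`Eq(f) Eq(g) = Eq(g) Eq(f)` for every pair of regular epimorphisms `f`, `g` of `𝒞`
with the same domain. -/
theorem statement0 [HasFiniteLimits 𝒞]
    (hcoeq : KernelPairsHaveCoequalisers 𝒞) (hstab : RegEpisStable 𝒞) :
    IsMaltsev 𝒞 ↔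
      ∀ {X Y Z : 𝒞} (f : X ⟶ Y) (g : X ⟶ Z), IsRegEpi f → IsRegEpi g →
        ∀ (τ₁ τ₂ : Rel 𝒞 X X),
          IsRelComp (kerPairRel f) (kerPairRel g) τ₁ →
          IsRelComp (kerPairRel g) (kerPairRel f) τ₂ → τ₁.equiv τ₂ := by
  constructor
  · -- Mal'tsev implies commuting composites
    intro hM X Y Z f g hf hg τ₁ τ₂ h1 h2
    obtain ⟨e₁, he₁, hp1, hp2⟩ := h1
    have hrefl : τ₁.IsReflexive := by
      refine ⟨pullback.lift (pullback.lift (𝟙 X) (𝟙 X) rfl) (pullback.lift (𝟙 X) (𝟙 X) rfl)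
        (by simp [kerPairRel]; erw [pullback.lift_snd, pullback.lift_fst]) ≫ e₁, ?_, ?_⟩
      · erw [Category.assoc, hp1, ← Category.assoc, pullback.lift_fst]
        simp [kerPairRel]; erw [pullback.lift_fst]
      · erw [Category.assoc, hp2, ← Category.assoc, pullback.lift_snd]
        simp [kerPairRel]; erw [pullback.lift_snd]
    obtain ⟨_, ⟨s, hs1, hs2⟩, _⟩ := hM τ₁ hrefl
    set swf : pullback f f ⟶ pullback f f :=
      pullback.lift (pullback.snd f f) (pullback.fst f f) pullback.condition.symm with hswf
    set swg : pullback g g ⟶ pullback g g :=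
      pullback.lift (pullback.snd g g) (pullback.fst g g) pullback.condition.symm with hswg
    have hswf2 : swf ≫ swf = 𝟙 _ := by
      apply pullback.hom_ext <;> simp [hswf]
      · erw [pullback.lift_fst, pullback.lift_snd]
      · erw [pullback.lift_snd, pullback.lift_fst]
    have hswg2 : swg ≫ swg = 𝟙 _ := by
      apply pullback.hom_ext <;> simp [hswg]
      · erw [pullback.lift_fst, pullback.lift_snd]
      · erw [pullback.lift_snd, pullback.lift_fst]
    have wcond : (pullback.snd (kerPairRel f).p2 (kerPairRel g).p1 ≫ swg) ≫ (kerPairRel g).p2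
        = (pullback.fst (kerPairRel f).p2 (kerPairRel g).p1 ≫ swf) ≫ (kerPairRel f).p1 := by
      show (_ ≫ swg) ≫ pullback.snd g g = (_ ≫ swf) ≫ pullback.fst f f
      simp only [Category.assoc, hswg, hswf, pullback.lift_snd, pullback.lift_fst]
      erw [Category.assoc, Category.assoc, pullback.lift_snd, pullback.lift_fst]
      exact pullback.condition.symm
    set w : pullback (kerPairRel f).p2 (kerPairRel g).p1 ⟶
        pullback (kerPairRel g).p2 (kerPairRel f).p1 :=
      pullback.lift (pullback.snd _ _ ≫ swg) (pullback.fst _ _ ≫ swf) wcond with hw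
    have w'cond : (pullback.snd (kerPairRel g).p2 (kerPairRel f).p1 ≫ swf) ≫ (kerPairRel f).p2
        = (pullback.fst (kerPairRel g).p2 (kerPairRel f).p1 ≫ swg) ≫ (kerPairRel g).p1 := by
      show (_ ≫ swf) ≫ pullback.snd f f = (_ ≫ swg) ≫ pullback.fst g g
      simp only [Category.assoc, hswg, hswf, pullback.lift_snd, pullback.lift_fst]
      erw [Category.assoc, Category.assoc, pullback.lift_snd, pullback.lift_fst]
      exact pullback.condition.symm
    set w' : pullback (kerPairRel g).p2 (kerPairRel f).p1 ⟶
        pullback (kerPairRel f).p2 (kerPairRel g).p1 :=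
      pullback.lift (pullback.snd _ _ ≫ swf) (pullback.fst _ _ ≫ swg) w'cond with hw'
    have hww' : w ≫ w' = 𝟙 _ := by
      apply pullback.hom_ext <;> simp [hw, hw', hswf2, hswg2]
      · erw [pullback.lift_fst, ← Category.assoc, pullback.lift_snd, Category.assoc, hswf2,
          Category.comp_id]
      · erw [pullback.lift_snd, ← Category.assoc, pullback.lift_fst, Category.assoc, hswg2,
          Category.comp_id]
    have hw'w : w' ≫ w = 𝟙 _ := by
      apply pullback.hom_ext <;> simp [hw, hw', hswf2, hswg2]
      · erw [pullback.lift_fst, ← Category.assoc, pullback.lift_snd, Category.assoc, hswg2,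
          Category.comp_id]
      · erw [pullback.lift_snd, ← Category.assoc, pullback.lift_fst, Category.assoc, hswf2,
          Category.comp_id]
    have h1' : IsRelComp (kerPairRel g) (kerPairRel f) (τ₁.op) := by
      refine ⟨w ≫ e₁, isRegEpi_precomp w w' hww' hw'w he₁, ?_, ?_⟩
      · show (w ≫ e₁) ≫ τ₁.p2 = _
        rw [Category.assoc, hp2, ← Category.assoc, hw]; erw [pullback.lift_snd]
        show (pullback.fst _ _ ≫ swf) ≫ pullback.snd f f = pullback.fst _ _ ≫ pullback.fst f f
        rw [Category.assoc, hswf]; erw [pullback.lift_snd]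
      · show (w ≫ e₁) ≫ τ₁.p1 = _
        rw [Category.assoc, hp1, ← Category.assoc, hw]; erw [pullback.lift_fst]
        show (pullback.snd _ _ ≫ swg) ≫ pullback.fst g g = pullback.snd _ _ ≫ pullback.snd g g
        rw [Category.assoc, hswg]; erw [pullback.lift_fst]
    have heq1 : τ₁.equiv τ₁.op := ⟨⟨s, hs2, hs1⟩, ⟨s, hs1, hs2⟩⟩
    exact heq1.trans' (relComp_unique h1' h2)
  · -- commuting composites imply Mal'tsev
    intro H X0 ρ hρ
    obtain ⟨e0, he01, he02⟩ := hρ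
    have hf : IsRegEpi ρ.p1 := isRegEpi_of_split _ e0 he01
    have hg : IsRegEpi ρ.p2 := isRegEpi_of_split _ e0 he02
    obtain ⟨τ₁, h1⟩ := relComp_exists hcoeq hstab (kerPairRel ρ.p1) (kerPairRel ρ.p2)
    obtain ⟨τ₂, h2⟩ := relComp_exists hcoeq hstab (kerPairRel ρ.p2) (kerPairRel ρ.p1)
    obtain ⟨⟨j, hj1, hj2⟩, -⟩ := H ρ.p1 ρ.p2 hf hg τ₁ τ₂ h1 h2
    obtain ⟨e₁, he₁, he₁1, he₁2⟩ := h1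
    obtain ⟨e₂, he₂, he₂1, he₂2⟩ := h2
    -- the witness-extraction lemma
    have key : ∀ (W : 𝒞) (k : W ⟶ τ₂.R), ∃ t : W ⟶ ρ.R,
        t ≫ ρ.p1 = k ≫ τ₂.p1 ≫ ρ.p1 ∧ t ≫ ρ.p2 = k ≫ τ₂.p2 ≫ ρ.p2 := by
      intro W k
      set v : pullback (kerPairRel ρ.p1).p2 (kerPairRel ρ.p2).p1 ⟶ ρ.R :=
        pullback.fst _ _ ≫ pullback.snd ρ.p1 ρ.p1 with hv
      have hv1 : v ≫ ρ.p1 = e₂ ≫ τ₂.p1 ≫ ρ.p1 := by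
        rw [← Category.assoc, he₂1, hv]
        show (pullback.fst _ _ ≫ pullback.snd ρ.p1 ρ.p1) ≫ ρ.p1
          = (pullback.fst _ _ ≫ pullback.fst ρ.p1 ρ.p1) ≫ ρ.p1
        simp only [Category.assoc]
        rw [pullback.condition (f := ρ.p1) (g := ρ.p1)]
      have hv2 : v ≫ ρ.p2 = e₂ ≫ τ₂.p2 ≫ ρ.p2 := by
        rw [← Category.assoc, he₂2, hv]
        have hmid : pullback.fst (kerPairRel ρ.p1).p2 (kerPairRel ρ.p2).p1 ≫
            pullback.snd ρ.p1 ρ.p1 = pullback.snd _ _ ≫ pullback.fst ρ.p2 ρ.p2 :=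
          pullback.condition
        rw [hmid]
        show (pullback.snd _ _ ≫ pullback.fst ρ.p2 ρ.p2) ≫ ρ.p2
          = (pullback.snd _ _ ≫ pullback.snd ρ.p2 ρ.p2) ≫ ρ.p2
        simp only [Category.assoc]
        rw [pullback.condition (f := ρ.p2) (g := ρ.p2)]
      have hq1 : IsRegEpi (pullback.fst k e₂) :=
        hstab _ _ _ _ (IsPullback.of_hasPullback k e₂) he₂
      set m : pullback k e₂ ⟶ ρ.R := pullback.snd k e₂ ≫ v with hmv
      have hm1 : m ≫ ρ.p1 = pullback.fst k e₂ ≫ k ≫ τ₂.p1 ≫ ρ.p1 := by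
        rw [hmv, Category.assoc, hv1, ← Category.assoc, ← pullback.condition,
          Category.assoc]
      have hm2 : m ≫ ρ.p2 = pullback.fst k e₂ ≫ k ≫ τ₂.p2 ≫ ρ.p2 := by
        rw [hmv, Category.assoc, hv2, ← Category.assoc, ← pullback.condition,
          Category.assoc]
      obtain ⟨Z, x, y, hxy, huniv⟩ := hq1
      have hxm : x ≫ m = y ≫ m := by
        apply ρ.jm
        · simp only [Category.assoc, hm1]; rw [reassoc_of% hxy]
        · simp only [Category.assoc, hm2]; rw [reassoc_of% hxy]
      obtain ⟨t, ht, -⟩ := huniv m hxm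
      have hq1' : IsRegEpi (pullback.fst k e₂) := ⟨Z, x, y, hxy, fun h hh => huniv h hh⟩
      refine ⟨t, hq1'.cancel ?_, hq1'.cancel ?_⟩
      · rw [← Category.assoc, ht, hm1]
      · rw [← Category.assoc, ht, hm2]
    refine ⟨⟨e0, he01, he02⟩, ?_, ?_⟩
    · -- symmetry
      have hdg : (ρ.p2 ≫ e0) ≫ ρ.p2 = (𝟙 ρ.R) ≫ ρ.p2 := by
        rw [Category.assoc, he02, Category.comp_id, Category.id_comp]
      have hdf : (𝟙 ρ.R) ≫ ρ.p1 = (ρ.p1 ≫ e0) ≫ ρ.p1 := by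
        rw [Category.assoc, he01, Category.comp_id, Category.id_comp]
      set dg : ρ.R ⟶ pullback ρ.p2 ρ.p2 := pullback.lift (ρ.p2 ≫ e0) (𝟙 ρ.R) hdg with hdgd
      set df : ρ.R ⟶ pullback ρ.p1 ρ.p1 := pullback.lift (𝟙 ρ.R) (ρ.p1 ≫ e0) hdf with hdfd
      have hcond : dg ≫ (kerPairRel ρ.p2).p2 = df ≫ (kerPairRel ρ.p1).p1 := by
        show dg ≫ pullback.snd ρ.p2 ρ.p2 = df ≫ pullback.fst ρ.p1 ρ.p1
        rw [hdgd, hdfd, pullback.lift_snd, pullback.lift_fst]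
      set ks : ρ.R ⟶ τ₂.R := pullback.lift dg df hcond ≫ e₁ ≫ j with hks
      have hks1 : ks ≫ τ₂.p1 = ρ.p2 ≫ e0 := by
        erw [hks, Category.assoc, Category.assoc, hj1, he₁1, ← Category.assoc,
          pullback.lift_fst, hdgd]
        show dg ≫ pullback.fst ρ.p2 ρ.p2 = ρ.p2 ≫ e0
        rw [hdgd, pullback.lift_fst]
      have hks2 : ks ≫ τ₂.p2 = ρ.p1 ≫ e0 := by
        erw [hks, Category.assoc, Category.assoc, hj2, he₁2, ← Category.assoc,
          pullback.lift_snd, hdfd]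
        show df ≫ pullback.snd ρ.p1 ρ.p1 = ρ.p1 ≫ e0
        rw [hdfd, pullback.lift_snd]
      obtain ⟨t, ht1, ht2⟩ := key _ ks
      refine ⟨t, ?_, ?_⟩
      · rw [ht1, ← Category.assoc, hks1, Category.assoc, he01, Category.comp_id]
      · rw [ht2, ← Category.assoc, hks2, Category.assoc, he02, Category.comp_id]
    · -- transitivity
      have hdg : pullback.fst ρ.p2 ρ.p1 ≫ ρ.p2
          = (pullback.fst ρ.p2 ρ.p1 ≫ ρ.p2 ≫ e0) ≫ ρ.p2 := by
        rw [Category.assoc, Category.assoc, he02, Category.comp_id]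
      have hdf : (pullback.fst ρ.p2 ρ.p1 ≫ ρ.p2 ≫ e0) ≫ ρ.p1
          = pullback.snd ρ.p2 ρ.p1 ≫ ρ.p1 := by
        rw [Category.assoc, Category.assoc, he01, Category.comp_id, pullback.condition]
      set dg : pullback ρ.p2 ρ.p1 ⟶ pullback ρ.p2 ρ.p2 :=
        pullback.lift (pullback.fst ρ.p2 ρ.p1) (pullback.fst ρ.p2 ρ.p1 ≫ ρ.p2 ≫ e0) hdg with hdgd
      set df : pullback ρ.p2 ρ.p1 ⟶ pullback ρ.p1 ρ.p1 :=
        pullback.lift (pullback.fst ρ.p2 ρ.p1 ≫ ρ.p2 ≫ e0) (pullback.snd ρ.p2 ρ.p1) hdf with hdfd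
      have hcond : dg ≫ (kerPairRel ρ.p2).p2 = df ≫ (kerPairRel ρ.p1).p1 := by
        show dg ≫ pullback.snd ρ.p2 ρ.p2 = df ≫ pullback.fst ρ.p1 ρ.p1
        rw [hdgd, hdfd, pullback.lift_snd, pullback.lift_fst]
      set kt : pullback ρ.p2 ρ.p1 ⟶ τ₂.R := pullback.lift dg df hcond ≫ e₁ ≫ j with hkt
      have hkt1 : kt ≫ τ₂.p1 = pullback.fst ρ.p2 ρ.p1 := by
        erw [hkt, Category.assoc, Category.assoc, hj1, he₁1, ← Category.assoc,
          pullback.lift_fst]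
        show dg ≫ pullback.fst ρ.p2 ρ.p2 = _
        rw [hdgd, pullback.lift_fst]
      have hkt2 : kt ≫ τ₂.p2 = pullback.snd ρ.p2 ρ.p1 := by
        erw [hkt, Category.assoc, Category.assoc, hj2, he₁2, ← Category.assoc,
          pullback.lift_snd]
        show df ≫ pullback.snd ρ.p1 ρ.p1 = _
        rw [hdfd, pullback.lift_snd]
      obtain ⟨t, ht1, ht2⟩ := key _ kt
      refine ⟨t, ?_, ?_⟩
      · rw [ht1, ← Category.assoc, hkt1]
      · rw [ht2, ← Category.assoc, hkt2]

end Paper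
end

section
/- In a regular category, a square of type (1) is a regular pushout — i.e. the comparison morphism ⟨g, c⟩: C → D×_B A to the pullback of d and f is a regular epimorphism — if and only if c g∘ = f∘ d, and this in turn holds if and only if g c∘ = d∘ f. -/
open CategoryTheory CategoryTheory.Limits

universe v u

namespace Paper

variable {𝒞 : Type u} [Category.{v} 𝒞]

variable {X Y Z : 𝒞}

section Aux

lemma IsRegEpi.comp_iso {X Y Z : 𝒞} {r : X ⟶ Y} (hr : IsRegEpi r) (i : Y ⟶ Z) [IsIso i] :
    IsRegEpi (r ≫ i) := by
  obtain ⟨W, a, b, hab, huniv⟩ := hr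
  refine ⟨W, a, b, by rw [← Category.assoc, hab, Category.assoc], fun {T} h hh => ?_⟩
  obtain ⟨u, hu, huu⟩ := huniv h hh
  refine ⟨inv i ≫ u, by simp [hu], fun w hw => ?_⟩
  have hw' : r ≫ (i ≫ w) = h := by
    rw [← Category.assoc]; exact hw
  rw [← huu _ hw']; simp

lemma IsRegEpi.iso_comp {X Y Z : 𝒞} {r : Y ⟶ Z} (hr : IsRegEpi r) (i : X ⟶ Y) [IsIso i] :
    IsRegEpi (i ≫ r) := by
  obtain ⟨W, a, b, hab, huniv⟩ := hr
  refine ⟨W, a ≫ inv i, b ≫ inv i, by simp [hab], fun {T} h hh => ?_⟩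
  obtain ⟨u, hu, huu⟩ := huniv (inv i ≫ h) (by simpa using hh)
  refine ⟨u, ?_, fun w hw => huu w ?_⟩
  · show (i ≫ r) ≫ u = h
    rw [Category.assoc, hu, ← Category.assoc]; simp
  · show r ≫ w = inv i ≫ h
    have hw' : (i ≫ r) ≫ w = h := hw
    rw [← hw']; simp

/-- In a regular category, if any pair coequalised by `q ≫ m` is coequalised
by `q`, with `q` a regular epi, then `m` is monomorphic. -/
lemma mono_of_image [HasPullbacks 𝒞] (hstab : RegEpisStable 𝒞) {X Q Y : 𝒞}
    (q : X ⟶ Q) (m : Q ⟶ Y) (hq : IsRegEpi q)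
    (hcoeqd : ∀ {Z : 𝒞} (u v : Z ⟶ X), u ≫ (q ≫ m) = v ≫ (q ≫ m) → u ≫ q = v ≫ q)
    {R : 𝒞} (a b : R ⟶ Q) (hab : a ≫ m = b ≫ m) : a = b := by
  have w1 : IsRegEpi (pullback.fst a q) :=
    hstab _ _ _ _ (IsPullback.of_hasPullback a q) hq
  set b1 : pullback a q ⟶ Q := pullback.fst a q ≫ b with hb1
  have w2 : IsRegEpi (pullback.fst b1 q) :=
    hstab _ _ _ _ (IsPullback.of_hasPullback b1 q) hq
  have c1 : pullback.fst a q ≫ a = pullback.snd a q ≫ q := pullback.condition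
  have c2 : pullback.fst b1 q ≫ b1 = pullback.snd b1 q ≫ q := pullback.condition
  have huq : (pullback.fst b1 q ≫ pullback.snd a q) ≫ q = pullback.snd b1 q ≫ q := by
    apply hcoeqd
    calc (pullback.fst b1 q ≫ pullback.snd a q) ≫ q ≫ m
        = pullback.fst b1 q ≫ (pullback.snd a q ≫ q) ≫ m := by
          simp only [Category.assoc]
      _ = pullback.fst b1 q ≫ (pullback.fst a q ≫ a) ≫ m := by rw [c1]
      _ = pullback.fst b1 q ≫ pullback.fst a q ≫ b ≫ m := by
          simp only [Category.assoc, hab]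
      _ = (pullback.fst b1 q ≫ b1) ≫ m := by simp only [hb1, Category.assoc]
      _ = pullback.snd b1 q ≫ q ≫ m := by rw [c2, Category.assoc]
  have main : pullback.fst b1 q ≫ pullback.fst a q ≫ a =
      pullback.fst b1 q ≫ pullback.fst a q ≫ b := by
    calc pullback.fst b1 q ≫ pullback.fst a q ≫ a
        = pullback.fst b1 q ≫ pullback.snd a q ≫ q := by rw [c1]
      _ = (pullback.fst b1 q ≫ pullback.snd a q) ≫ q := by
          simp only [Category.assoc]
      _ = pullback.snd b1 q ≫ q := huq
      _ = pullback.fst b1 q ≫ b1 := c2.symm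
      _ = pullback.fst b1 q ≫ pullback.fst a q ≫ b := by
          simp only [hb1, Category.assoc]
  exact w1.cancel (w2.cancel main)

/-- Regular image factorisation in a regular category. -/
lemma image_fact [HasPullbacks 𝒞] (hcoeq : KernelPairsHaveCoequalisers 𝒞)
    (hstab : RegEpisStable 𝒞) {X Y : 𝒞} (h : X ⟶ Y) :
    ∃ (Q : 𝒞) (q : X ⟶ Q) (m : Q ⟶ Y), IsRegEpi q ∧ Mono m ∧ q ≫ m = h := by
  obtain ⟨Q, q, hq1, hq2⟩ := hcoeq h (pullback.fst h h) (pullback.snd h h)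
    (IsPullback.of_hasPullback h h)
  obtain ⟨m, hm, -⟩ := hq2 h pullback.condition
  have hq : IsRegEpi q := ⟨_, _, _, hq1, @hq2⟩
  have hcoeqd : ∀ {Z : 𝒞} (u v : Z ⟶ X), u ≫ (q ≫ m) = v ≫ (q ≫ m) → u ≫ q = v ≫ q := by
    intro Z u v huv
    have huv' : u ≫ h = v ≫ h := by rwa [hm] at huv
    have e1 : pullback.lift u v huv' ≫ pullback.fst h h = u := pullback.lift_fst _ _ _
    have e2 : pullback.lift u v huv' ≫ pullback.snd h h = v := pullback.lift_snd _ _ _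
    have h3 : pullback.lift u v huv' ≫ (pullback.fst h h ≫ q) =
        pullback.lift u v huv' ≫ (pullback.snd h h ≫ q) := by rw [hq1]
    rw [← Category.assoc, ← Category.assoc, e1, e2] at h3
    exact h3
  exact ⟨Q, q, m, hq, ⟨fun a b hab => mono_of_image hstab q m hq hcoeqd a b hab⟩, hm⟩

/-- Key lemma: for a commutative square with the pullback `P = D ×_B A`, the
comparison `⟨g,c⟩` is a regular epi iff `c g° = f° d` as relations. -/
lemma key_lemma [HasFiniteLimits 𝒞] (hcoeq : KernelPairsHaveCoequalisers 𝒞)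
    (hstab : RegEpisStable 𝒞)
    {A B E D : 𝒞} (f : A ⟶ B) (g : E ⟶ D) (c : E ⟶ A) (d : D ⟶ B)
    (comm : c ≫ f = g ≫ d) :
    IsRegEpi (pullback.lift g c comm.symm : E ⟶ pullback d f) ↔
      (∀ (τ₁ τ₂ : Rel 𝒞 D A),
        IsRelComp (homRel c) (Rel.op (homRel g)) τ₁ →
        IsRelComp (Rel.op (homRel f)) (homRel d) τ₂ → τ₁.equiv τ₂) := by
  set hP : E ⟶ pullback d f := pullback.lift g c comm.symm with hPdef
  have hPfst : hP ≫ pullback.fst d f = g := pullback.lift_fst _ _ _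
  have hPsnd : hP ≫ pullback.snd d f = c := pullback.lift_snd _ _ _
  -- the diagonal iso `E ≅ pullback (𝟙 E) (𝟙 E)`
  set δ : E ⟶ pullback (𝟙 E) (𝟙 E) := pullback.lift (𝟙 E) (𝟙 E) rfl with hδ
  have hEE : (pullback.fst (𝟙 E) (𝟙 E) : pullback (𝟙 E) (𝟙 E) ⟶ E) =
      pullback.snd (𝟙 E) (𝟙 E) := by
    have := pullback.condition (f := 𝟙 E) (g := 𝟙 E)
    simpa using this
  have hδfst : δ ≫ pullback.fst (𝟙 E) (𝟙 E) = 𝟙 E := pullback.lift_fst _ _ _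
  have hδsnd : δ ≫ pullback.snd (𝟙 E) (𝟙 E) = 𝟙 E := pullback.lift_snd _ _ _
  have hfstδ : pullback.fst (𝟙 E) (𝟙 E) ≫ δ = 𝟙 _ := by
    apply pullback.hom_ext <;> simp only [Category.assoc, hδfst, ← hEE, Category.comp_id, Category.id_comp]
  have hδiso : IsIso δ := ⟨pullback.fst (𝟙 E) (𝟙 E), hδfst, hfstδ⟩
  constructor
  · -- regular epi ⇒ relation equality
    intro hre τ₁ τ₂ h1 h2
    obtain ⟨e₁, he₁, he₁1, he₁2⟩ := h1
    obtain ⟨e₂, he₂, he₂1, he₂2⟩ := h2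
    simp only [homRel, Rel.op] at he₁1 he₁2 he₂1 he₂2
    rw [Category.comp_id] at he₂1 he₂2
    -- `e' : E ⟶ τ₁.R` with `e' ≫ τ₁.p1 = g`, `e' ≫ τ₁.p2 = c`
    obtain ⟨e', he'reg, he'1, he'2⟩ :
        ∃ e' : E ⟶ τ₁.R, IsRegEpi e' ∧ e' ≫ τ₁.p1 = g ∧ e' ≫ τ₁.p2 = c := by
      refine ⟨δ ≫ e₁, @IsRegEpi.iso_comp _ _ _ _ _ _ he₁ δ hδiso, ?_, ?_⟩
      · erw [Category.assoc, he₁1, ← Category.assoc, hδfst, Category.id_comp]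
      · erw [Category.assoc, he₁2, ← Category.assoc, ← hEE, hδfst, Category.id_comp]
    constructor
    · -- τ₁ ≤ τ₂ : factor through the pullback, then through e₂
      have hτd : τ₁.p1 ≫ d = τ₁.p2 ≫ f := by
        apply he'reg.cancel
        rw [← Category.assoc, ← Category.assoc, he'1, he'2, comm]
      refine ⟨pullback.lift τ₁.p1 τ₁.p2 hτd ≫ e₂, ?_, ?_⟩
      · erw [Category.assoc, he₂1, pullback.lift_fst]
      · erw [Category.assoc, he₂2, pullback.lift_snd]
    · -- τ₂ ≤ τ₁ : use that `hP` is a regular epi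
      obtain ⟨Z, a, b, hab, huniv⟩ := hre
      have habe : a ≫ e' = b ≫ e' := by
        apply τ₁.jm
        · rw [Category.assoc, Category.assoc, he'1, ← hPfst,
            ← Category.assoc, ← Category.assoc, hab]
        · rw [Category.assoc, Category.assoc, he'2, ← hPsnd,
            ← Category.assoc, ← Category.assoc, hab]
      obtain ⟨k, hk, -⟩ := huniv e' habe
      have hre' : IsRegEpi hP := ⟨Z, a, b, hab, @huniv⟩
      have hk1 : k ≫ τ₁.p1 = pullback.fst d f := by
        apply hre'.cancel
        rw [← Category.assoc, hk, he'1, hPfst]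
      have hk2 : k ≫ τ₁.p2 = pullback.snd d f := by
        apply hre'.cancel
        rw [← Category.assoc, hk, he'2, hPsnd]
      -- descend `k` along the regular epi `e₂`
      obtain ⟨Z₂, a₂, b₂, hab₂, huniv₂⟩ := he₂
      have habk : a₂ ≫ k = b₂ ≫ k := by
        apply τ₁.jm
        · erw [Category.assoc, Category.assoc, hk1, ← he₂1,
            ← Category.assoc, ← Category.assoc, hab₂]
        · erw [Category.assoc, Category.assoc, hk2, ← he₂2,
            ← Category.assoc, ← Category.assoc, hab₂]
      obtain ⟨j, hj, -⟩ := huniv₂ k habk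
      have he₂reg : IsRegEpi e₂ := ⟨Z₂, a₂, b₂, hab₂, @huniv₂⟩
      refine ⟨j, ?_, ?_⟩
      · apply he₂reg.cancel
        erw [← Category.assoc, hj, hk1, he₂1]
      · apply he₂reg.cancel
        erw [← Category.assoc, hj, hk2, he₂2]
  · -- relation equality ⇒ regular epi
    intro hcond
    obtain ⟨Q, q, m, hq, hmono, hqm⟩ := image_fact hcoeq hstab hP
    have jm₁ : ∀ {Z : 𝒞} (a b : Z ⟶ Q),
        a ≫ (m ≫ pullback.fst d f) = b ≫ (m ≫ pullback.fst d f) →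
        a ≫ (m ≫ pullback.snd d f) = b ≫ (m ≫ pullback.snd d f) → a = b := by
      intro Z a b hx hy
      have : a ≫ m = b ≫ m := by
        apply pullback.hom_ext
        · simpa using hx
        · simpa using hy
      exact hmono.right_cancellation _ _ this
    set τ₁ : Rel 𝒞 D A := ⟨Q, m ≫ pullback.fst d f, m ≫ pullback.snd d f, jm₁⟩ with hτ₁
    set τ₂ : Rel 𝒞 D A := ⟨pullback d f, pullback.fst d f, pullback.snd d f,
      fun a b h1 h2 => pullback.hom_ext h1 h2⟩ with hτ₂
    have h1 : IsRelComp (homRel c) (Rel.op (homRel g)) τ₁ := by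
      refine ⟨(pullback.fst (𝟙 E) (𝟙 E) : pullback (𝟙 E) (𝟙 E) ⟶ E) ≫ q, ?_, ?_, ?_⟩
      · exact @IsRegEpi.iso_comp _ _ _ _ _ _ hq (pullback.fst (𝟙 E) (𝟙 E))
          ⟨δ, hfstδ, hδfst⟩
      · show (pullback.fst (𝟙 E) (𝟙 E) ≫ q) ≫ (m ≫ pullback.fst d f) =
          pullback.fst (𝟙 E) (𝟙 E) ≫ g
        rw [Category.assoc, ← Category.assoc q, hqm, hPfst]
      · show (pullback.fst (𝟙 E) (𝟙 E) ≫ q) ≫ (m ≫ pullback.snd d f) =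
          pullback.snd (𝟙 E) (𝟙 E) ≫ c
        rw [Category.assoc, ← Category.assoc q, hqm, hPsnd, hEE]
    have h2 : IsRelComp (Rel.op (homRel f)) (homRel d) τ₂ := by
      refine ⟨𝟙 (pullback d f), ?_, by simp [homRel, Rel.op]; rfl, by simp [homRel, Rel.op]; rfl⟩
      exact ⟨pullback d f, 𝟙 _, 𝟙 _, rfl,
        fun h _ => ⟨h, Category.id_comp h,
          fun u hu => by rw [← Category.id_comp u]; exact hu⟩⟩
    obtain ⟨-, hle⟩ := hcond τ₁ τ₂ h1 h2
    obtain ⟨k, hk1, hk2⟩ := hle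
    have hkm : k ≫ m = 𝟙 (pullback d f) := by
      apply pullback.hom_ext
      · simpa [τ₁, τ₂] using hk1
      · simpa [τ₁, τ₂] using hk2
    have hmk : m ≫ k = 𝟙 Q := by
      apply hmono.right_cancellation
      rw [Category.assoc, hkm, Category.comp_id, Category.id_comp]
    have hmiso : IsIso m := ⟨k, hmk, hkm⟩
    rw [← hqm]
    exact @IsRegEpi.comp_iso _ _ _ _ _ _ hq m hmiso

end Aux

/-- In a regular category, a square of type (1) is a regular
pushout (the comparison `⟨g,c⟩ : C → D ×_B A` is a regular epimorphism) iff
`c g° = f° d`, iff `g c° = d° f`. -/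
theorem statement1 [HasFiniteLimits 𝒞]
    (hcoeq : KernelPairsHaveCoequalisers 𝒞) (hstab : RegEpisStable 𝒞)
    {A B E D : 𝒞} (f : A ⟶ B) (s : B ⟶ A) (g : E ⟶ D) (t : D ⟶ E)
    (c : E ⟶ A) (d : D ⟶ B) (hsq : IsSquare1 f s g t c d) :
    (IsRegEpi (pullback.lift g c hsq.comm1.symm : E ⟶ pullback d f) ↔
      (∀ (τ₁ τ₂ : Rel 𝒞 D A),
        IsRelComp (homRel c) (Rel.op (homRel g)) τ₁ →
        IsRelComp (Rel.op (homRel f)) (homRel d) τ₂ → τ₁.equiv τ₂)) ∧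
    ((∀ (τ₁ τ₂ : Rel 𝒞 D A),
        IsRelComp (homRel c) (Rel.op (homRel g)) τ₁ →
        IsRelComp (Rel.op (homRel f)) (homRel d) τ₂ → τ₁.equiv τ₂) ↔
      (∀ (τ₁ τ₂ : Rel 𝒞 A D),
        IsRelComp (homRel g) (Rel.op (homRel c)) τ₁ →
        IsRelComp (Rel.op (homRel d)) (homRel f) τ₂ → τ₁.equiv τ₂)) := by
  have h1 := key_lemma hcoeq hstab f g c d hsq.comm1
  have h2 := key_lemma hcoeq hstab d c g f hsq.comm1.symm
  have bridge : IsRegEpi (pullback.lift g c hsq.comm1.symm : E ⟶ pullback d f) ↔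
      IsRegEpi (pullback.lift c g hsq.comm1.symm.symm : E ⟶ pullback f d) := by
    have hcomp : (pullback.lift g c hsq.comm1.symm : E ⟶ pullback d f) ≫
        (pullbackSymmetry d f).hom = pullback.lift c g hsq.comm1.symm.symm := by
      apply pullback.hom_ext <;> simp [pullback.lift_fst, pullback.lift_snd]
    constructor
    · intro h
      rw [← hcomp]
      exact h.comp_iso _
    · intro h
      have h' := h.comp_iso (pullbackSymmetry d f).inv
      rwa [← hcomp, Category.assoc, Iso.hom_inv_id, Category.comp_id] at h'
  exact ⟨h1, h1.symm.trans (bridge.trans h2)⟩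

end Paper
end

section
/- Let C be a regular multi-pointed category with kernels. If Eq(f) Eq(g)* ≤ Eq(g) Eq(f)* for every pair of regular epimorphisms f and g of C with the same domain, then Eq(f) Eq(g)* = Eq(g) Eq(f)* for every such pair, i.e. C is 2-star-permutable. -/
open CategoryTheory CategoryTheory.Limits

universe v u

namespace Paper

variable {𝒞 : Type u} [Category.{v} 𝒞]

variable {X Y Z : 𝒞}

/-- In a regular multi-pointed category with kernels, if
`Eq(f) Eq(g)* ≤ Eq(g) Eq(f)*` for all regular epimorphisms `f`, `g` with the same
domain, then equality holds for all such pairs, i.e. `𝒞` is 2-star-permutable. -/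
theorem statement3 [HasFiniteLimits 𝒞]
    (hcoeq : KernelPairsHaveCoequalisers 𝒞) (hstab : RegEpisStable 𝒞)
    (N : MorphismProperty 𝒞) (hN : IsIdeal N) (hker : HasNKernels N)
    (hle : ∀ {X Y Z : 𝒞} (f : X ⟶ Y) (g : X ⟶ Z), IsRegEpi f → IsRegEpi g →
      ∀ (sf sg : Rel 𝒞 X X), IsLargestStarSub N (kerPairRel f) sf →
        IsLargestStarSub N (kerPairRel g) sg →
      ∀ (τ₁ τ₂ : Rel 𝒞 X X), IsRelComp (kerPairRel f) sg τ₁ →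
        IsRelComp (kerPairRel g) sf τ₂ → τ₁.le τ₂) :
    TwoStarPermutable 𝒞 N := by
  intro X Y Z f g hf hg sf sg hsf hsg τ₁ τ₂ h₁ h₂
  exact ⟨hle f g hf hg sf sg hsf hsg τ₁ τ₂ h₁ h₂,
         hle g f hg hf sg sf hsg hsf τ₂ τ₁ h₂ h₁⟩

end Paper
end
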